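/- Let h be a fractional [1, k+1/2]-factor of a graph G with values in {0, 1/2, 1}, chosen so that the number of edges with nonzero value is minimum, and let F be the spanning subgraph induced by the edges of nonzero value. Then F contains no cycle of even length. -/

import Mathlib

open SimpleGraph

/-- The `h`-degree of a vertex `v`: the sum of `h` over the edges incident with `v`. -/
noncomputable def hdeg {V : Type*} (G : SimpleGraph V) (h : Sym2 V → ℚ) (v : V) : ℚ :=
  ∑ᶠ e ∈ G.incidenceSet v, h e

/-- `h` is a fractional `[a,b]`-factor of `G`: a function on edges with values in `[0,1]`
(vanishing off the edge set) whose `h`-degree lies in `[a,b]` at every vertex. -/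
def IsFracFactor {V : Type*} (G : SimpleGraph V) (a b : ℚ) (h : Sym2 V → ℚ) : Prop :=
  (∀ e, h e ≠ 0 → e ∈ G.edgeSet) ∧ (∀ e, 0 ≤ h e ∧ h e ≤ 1) ∧
    ∀ v : V, a ≤ hdeg G h v ∧ hdeg G h v ≤ b

section Aux

open List

variable {V : Type*} {G : SimpleGraph V}


lemma end_mem_getLast?_edges {y x : V} (q : G.Walk y x) {e : Sym2 V}
    (he : q.edges.getLast? = some e) : x ∈ e := by
  induction q with
  | nil => simp at he
  | cons h q ih =>
    cases q with
    | nil =>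
      simp only [Walk.edges_cons, Walk.edges_nil, List.getLast?_singleton,
        Option.some.injEq] at he
      subst he; simp
    | cons h' q' =>
      simp only [Walk.edges_cons] at he ih ⊢
      rw [List.getLast?_cons_cons] at he
      exact ih he

lemma eq_getLast?_of_end_mem {y x : V} {q : G.Walk y x} (hq : q.IsPath) {e : Sym2 V}
    (he : e ∈ q.edges) (hx : x ∈ e) : q.edges.getLast? = some e := by
  induction q with
  | nil => simp at he
  | cons h q ih =>
    rw [Walk.cons_isPath_iff] at hq
    rw [Walk.edges_cons] at he
    cases q with
    | nil =>
      simp only [Walk.edges_nil, List.mem_singleton] at he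
      simp [he]
    | cons h' q' =>
      rcases List.mem_cons.mp he with rfl | he'
      · exfalso
        rcases Sym2.mem_iff.mp hx with rfl | rfl
        · exact hq.2 (Walk.end_mem_support _)
        · have := (Walk.cons_isPath_iff _ _).mp hq.1
          exact this.2 (Walk.end_mem_support _)
      · simp only [Walk.edges_cons] at ih ⊢
        rw [List.getLast?_cons_cons]
        exact ih hq.1 he' hx

lemma cycle_mem_edge_iff {x : V} {c : G.Walk x x} (hc : c.IsCycle) {e : Sym2 V}
    (he : e ∈ c.edges) : x ∈ e ↔ c.edges.head? = some e ∨ c.edges.getLast? = some e := by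
  cases c with
  | nil => simp at he
  | cons h q =>
    have hq := (Walk.cons_isCycle_iff q h).mp hc
    have hqne : q.edges ≠ [] := by
      have h3 := hc.three_le_length
      simp only [Walk.length_cons] at h3
      have hlq : q.edges.length = q.length := q.length_edges
      intro hcon; rw [hcon] at hlq; simp at hlq; omega
    have hlast : ∀ (w : Sym2 V), (w :: q.edges).getLast? = q.edges.getLast? := by
      intro w
      obtain ⟨e0, t, hqe⟩ := List.exists_cons_of_ne_nil hqne
      rw [hqe, List.getLast?_cons_cons]
    rw [Walk.edges_cons] at he ⊢
    rw [hlast]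
    constructor
    · intro hx
      rcases List.mem_cons.mp he with rfl | he'
      · left; rfl
      · right; exact eq_getLast?_of_end_mem hq.1 he' hx
    · rintro (hh | hl)
      · simp only [List.head?_cons, Option.some.injEq] at hh
        subst hh; simp
      · exact end_mem_getLast?_edges q hl

lemma cycle_head_ne_getLast {x : V} {c : G.Walk x x} (hc : c.IsCycle) {e₁ e₂ : Sym2 V}
    (h₁ : c.edges.head? = some e₁) (h₂ : c.edges.getLast? = some e₂) : e₁ ≠ e₂ := by
  cases c with
  | nil => simp at h₁
  | cons h q =>
    have hq := (Walk.cons_isCycle_iff q h).mp hc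
    have hqne : q.edges ≠ [] := by
      have h3 := hc.three_le_length
      simp only [Walk.length_cons] at h3
      have hlq : q.edges.length = q.length := q.length_edges
      intro hcon; rw [hcon] at hlq; simp at hlq; omega
    rw [Walk.edges_cons, List.head?_cons, Option.some.injEq] at h₁
    rw [Walk.edges_cons] at h₂
    obtain ⟨e0, t, hqe⟩ := List.exists_cons_of_ne_nil hqne
    rw [hqe, List.getLast?_cons_cons] at h₂
    have : e₂ ∈ q.edges := by
      rw [hqe]
      exact List.mem_of_getLast? h₂
    subst h₁
    intro hcon; subst hcon
    exact hq.2 this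

lemma two_incident_edges {v : V} {p : G.Walk v v} (hp : p.IsCycle) {x : V} (hx : x ∈ p.support) :
    ∃ a b : ℕ, a < p.edges.length ∧ b < p.edges.length ∧ (a + 1) % p.edges.length = b ∧
      ∃ ea eb : Sym2 V, p.edges[a]? = some ea ∧ p.edges[b]? = some eb ∧ ea ≠ eb ∧
        ∀ e ∈ p.edges, (x ∈ e ↔ e = ea ∨ e = eb) := by
  classical
  set c := p.rotate x hx with hcdef
  have hcyc : c.IsCycle := hp.rotate hx
  obtain ⟨k, hk⟩ := p.rotate_edges x hx
  set n := c.edges.length with hn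
  have hpn : p.edges.length = n := by rw [← hk, List.length_rotate]
  have h3 : 3 ≤ n := by
    rw [← hpn, p.length_edges]; exact hp.three_le_length
  have hn0 : 0 < n := by omega
  set k' := k % n with hk'def
  have hk'lt : k' < n := Nat.mod_lt _ hn0
  have hk2 : c.edges.rotate k' = p.edges := by
    rw [hk'def, hn, List.rotate_mod]; exact hk
  set b := (n - k') % n with hbdef
  set a := (b + (n - 1)) % n with hadef
  have hb : b < n := Nat.mod_lt _ hn0
  have ha : a < n := Nat.mod_lt _ hn0
  have hib : (b + k') % n = 0 := by
    rcases Nat.eq_zero_or_pos k' with h0 | hpos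
    · simp [hbdef, h0, Nat.mod_self]
    · have hbv : b = n - k' := by rw [hbdef]; exact Nat.mod_eq_of_lt (by omega)
      rw [hbv]
      have hnn : n - k' + k' = n := by omega
      rw [hnn, Nat.mod_self]
  have hia : (a + k') % n = n - 1 := by
    rw [hadef, Nat.mod_add_mod]
    have e1 : b + (n - 1) + k' = b + k' + (n - 1) := by omega
    rw [e1, Nat.add_mod (b + k'), hib]
    simp [Nat.mod_eq_of_lt (show n - 1 < n by omega)]
  have hab : (a + 1) % n = b := by
    rw [hadef, Nat.mod_add_mod]
    have e1 : b + (n - 1) + 1 = b + n := by omega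
    rw [e1, Nat.add_mod_right]
    exact Nat.mod_eq_of_lt hb
  have hcne : c.edges ≠ [] := List.ne_nil_of_length_pos (by omega)
  obtain ⟨eb, heb⟩ := Option.isSome_iff_exists.mp (List.isSome_head?.mpr hcne)
  obtain ⟨ea, hea⟩ := Option.isSome_iff_exists.mp (List.getLast?_isSome.mpr hcne)
  have hga : p.edges[a]? = some ea := by
    rw [← hk2, List.getElem?_rotate (by rw [← hn]; exact ha), ← hn, hia,
      ← List.getLast?_eq_getElem?, hea]
  have hgb : p.edges[b]? = some eb := by
    rw [← hk2, List.getElem?_rotate (by rw [← hn]; exact hb), ← hn, hib,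
      ← List.head?_eq_getElem?, heb]
  refine ⟨a, b, by omega, by omega, by rw [hpn]; exact hab, ea, eb, hga, hgb,
    (cycle_head_ne_getLast hcyc heb hea).symm, ?_⟩
  intro e he
  have hec : e ∈ c.edges := by
    rw [← hk2] at he; exact List.mem_rotate.mp he
  rw [cycle_mem_edge_iff hcyc hec, heb, hea]
  constructor
  · rintro (h1 | h1) <;> [right; left] <;> exact (Option.some_inj.mp h1).symm
  · rintro (rfl | rfl) <;> [right; left] <;> rfl

end Aux

/-- If `h` is a fractional `[1, k+1/2]`-factor of `G` with values in `{0, 1/2, 1}`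
whose support has the minimum number of edges, then the spanning subgraph `F` induced
by the support of `h` contains no cycle of even length. -/
theorem stmt18 {V : Type*} [Fintype V] (G : SimpleGraph V) (k : ℕ) (hk : 1 ≤ k)
    (h : Sym2 V → ℚ) (hfrac : IsFracFactor G 1 ((k : ℚ) + 1/2) h)
    (hval : ∀ e : Sym2 V, h e = 0 ∨ h e = 1/2 ∨ h e = 1)
    (hmin : ∀ h' : Sym2 V → ℚ, IsFracFactor G 1 ((k : ℚ) + 1/2) h' →
      (∀ e : Sym2 V, h' e = 0 ∨ h' e = 1/2 ∨ h' e = 1) →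
      {e : Sym2 V | h e ≠ 0}.ncard ≤ {e : Sym2 V | h' e ≠ 0}.ncard) :
    ∀ (v : V) (p : (SimpleGraph.fromEdgeSet {e : Sym2 V | h e ≠ 0}).Walk v v),
      p.IsCycle → ¬ Even p.length := by
  classical
  intro v p hp hev
  obtain ⟨hsupp, hbound, hdegs⟩ := hfrac
  have hnodup : p.edges.Nodup := hp.edges_nodup
  have hlen3 : 3 ≤ p.edges.length := by rw [p.length_edges]; exact hp.three_le_length
  have hevL : Even p.edges.length := by rw [p.length_edges]; exact hev
  have hFe : ∀ e ∈ p.edges, h e ≠ 0 := by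
    intro e he
    have := p.edges_subset_edgeSet he
    rw [edgeSet_fromEdgeSet] at this
    exact this.1
  have hGe : ∀ e ∈ p.edges, e ∈ G.edgeSet := fun e he => hsupp e (hFe e he)
  have hhalf : ∀ e ∈ p.edges, (1:ℚ)/2 ≤ h e := by
    intro e he
    rcases hval e with h0 | h1 | h1
    · exact absurd h0 (hFe e he)
    · rw [h1]
    · rw [h1]; norm_num
  set h' : Sym2 V → ℚ :=
    fun e => if e ∈ p.edges then (if Even (p.edges.idxOf e) then 1 else 0) else h e with hh'
  have h'mem : ∀ (i : ℕ) (hi : i < p.edges.length),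
      h' (p.edges[i]'hi) = if Even i then 1 else 0 := by
    intro i hi
    have hmem : p.edges[i]'hi ∈ p.edges := List.getElem_mem _
    rw [hh']
    simp only [hmem, if_true, hnodup.idxOf_getElem]
  have h'not : ∀ e, e ∉ p.edges → h' e = h e := by
    intro e he; rw [hh']; simp [he]
  -- incidence finsets
  have hdeg_eq : ∀ (f : Sym2 V → ℚ) (x : V),
      hdeg G f x = ∑ e ∈ (Set.toFinite (G.incidenceSet x)).toFinset, f e :=
    fun f x => by unfold hdeg; exact finsum_mem_eq_finite_toFinset_sum f (Set.toFinite _)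
  have hmemI : ∀ (x : V) (e : Sym2 V),
      e ∈ (Set.toFinite (G.incidenceSet x)).toFinset ↔ e ∈ G.edgeSet ∧ x ∈ e := by
    intro x e
    rw [Set.Finite.mem_toFinset]
    simp [SimpleGraph.incidenceSet]
  have hdeg' : ∀ x, 1 ≤ hdeg G h' x ∧ hdeg G h' x ≤ hdeg G h x := by
    intro x
    by_cases hxs : x ∈ p.support
    · obtain ⟨a, b, ha, hb, hab, ea, eb, hga, hgb, hne, hiff⟩ := two_incident_edges hp hxs
      have hgae : p.edges[a]'ha = ea := by
        rw [List.getElem?_eq_getElem ha, Option.some_inj] at hga; exact hga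
      have hgbe : p.edges[b]'hb = eb := by
        rw [List.getElem?_eq_getElem hb, Option.some_inj] at hgb; exact hgb
      have heaL : ea ∈ p.edges := hgae ▸ List.getElem_mem _
      have hebL : eb ∈ p.edges := hgbe ▸ List.getElem_mem _
      have hvea : h' ea = if Even a then 1 else 0 := by rw [← hgae]; exact h'mem a ha
      have hveb : h' eb = if Even b then 1 else 0 := by rw [← hgbe]; exact h'mem b hb
      have hpar : Even a ↔ ¬ Even b := by
        have h2 : 2 ∣ p.edges.length := hevL.two_dvd
        have : b % 2 = (a + 1) % 2 := by rw [← hab, Nat.mod_mod_of_dvd _ h2]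
        rw [Nat.even_iff, Nat.even_iff]
        omega
      have hsum1 : h' ea + h' eb = 1 := by
        rw [hvea, hveb]
        by_cases hA : Even a
        · simp [hA, hpar.mp hA]
        · have hB : Even b := not_not.mp (fun hnb => hA (hpar.mpr hnb))
          simp [hA, hB]
      have hxea : x ∈ ea := (hiff ea heaL).mpr (Or.inl rfl)
      have hxeb : x ∈ eb := (hiff eb hebL).mpr (Or.inr rfl)
      have hpairsub : ({ea, eb} : Finset (Sym2 V)) ⊆ (Set.toFinite (G.incidenceSet x)).toFinset := by
        intro e he
        rcases Finset.mem_insert.mp he with rfl | he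
        · exact (hmemI x e).mpr ⟨hGe e heaL, hxea⟩
        · rw [Finset.mem_singleton] at he; subst he
          exact (hmemI x e).mpr ⟨hGe e hebL, hxeb⟩
      have hIs : ∑ e ∈ (Set.toFinite (G.incidenceSet x)).toFinset, h' e =
          ∑ e ∈ (Set.toFinite (G.incidenceSet x)).toFinset, h e +
          ∑ e ∈ (Set.toFinite (G.incidenceSet x)).toFinset, (h' e - h e) := by
        rw [← Finset.sum_add_distrib]
        exact Finset.sum_congr rfl (fun e _ => by ring)
      have hDsum : ∑ e ∈ (Set.toFinite (G.incidenceSet x)).toFinset, (h' e - h e) =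
          1 - h ea - h eb := by
        rw [← Finset.sum_subset hpairsub ?_]
        · rw [Finset.sum_pair hne]
          linarith [hsum1]
        · intro e heI hepair
          by_cases heL : e ∈ p.edges
          · exfalso
            have hxe : x ∈ e := ((hmemI x e).mp heI).2
            rcases (hiff e heL).mp hxe with rfl | rfl
            · exact hepair (Finset.mem_insert_self _ _)
            · exact hepair (Finset.mem_insert_of_mem (Finset.mem_singleton_self _))
          · rw [h'not e heL]; ring
      have hlow : h ea + h eb ≤ ∑ e ∈ (Set.toFinite (G.incidenceSet x)).toFinset, h e := by
        have := Finset.sum_le_sum_of_subset_of_nonneg hpairsub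
          (fun e _ _ => (hbound e).1)
        rwa [Finset.sum_pair hne] at this
      constructor
      · rw [hdeg_eq h' x, hIs, hDsum]
        linarith
      · rw [hdeg_eq h' x, hdeg_eq h x, hIs, hDsum]
        have h1 := hhalf ea heaL
        have h2 := hhalf eb hebL
        linarith
    · have hsame : ∀ e ∈ (Set.toFinite (G.incidenceSet x)).toFinset, h' e = h e := by
        intro e heI
        refine h'not e (fun heL => ?_)
        have hxe : x ∈ e := ((hmemI x e).mp heI).2
        obtain ⟨⟨y, z⟩, rfl⟩ := Quot.exists_rep e
        rcases Sym2.mem_iff.mp hxe with rfl | rfl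
        · exact hxs (p.fst_mem_support_of_mem_edges heL)
        · exact hxs (p.snd_mem_support_of_mem_edges heL)
      have heq : hdeg G h' x = hdeg G h x := by
        rw [hdeg_eq h' x, hdeg_eq h x]
        exact Finset.sum_congr rfl hsame
      exact ⟨heq ▸ (hdegs x).1, heq ▸ le_refl _⟩
  have hfrac' : IsFracFactor G 1 ((k : ℚ) + 1/2) h' := by
    refine ⟨?_, ?_, ?_⟩
    · intro e he
      by_cases heL : e ∈ p.edges
      · exact hGe e heL
      · rw [h'not e heL] at he; exact hsupp e he
    · intro e
      by_cases heL : e ∈ p.edges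
      · rw [hh']; simp only [heL, if_true]
        split <;> norm_num
      · rw [h'not e heL]; exact hbound e
    · intro x
      exact ⟨(hdeg' x).1, le_trans (hdeg' x).2 (hdegs x).2⟩
  have hval' : ∀ e : Sym2 V, h' e = 0 ∨ h' e = 1/2 ∨ h' e = 1 := by
    intro e
    by_cases heL : e ∈ p.edges
    · rw [hh']; simp only [heL, if_true]
      split
      · right; right; rfl
      · left; rfl
    · rw [h'not e heL]; exact hval e
  have hle := hmin h' hfrac' hval'
  have h1lt : 1 < p.edges.length := by omega
  have he1L : p.edges[1]'h1lt ∈ p.edges := List.getElem_mem _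
  have h'e1 : h' (p.edges[1]'h1lt) = 0 := by
    rw [h'mem 1 h1lt]; simp
  have hssub : {e : Sym2 V | h' e ≠ 0} ⊂ {e : Sym2 V | h e ≠ 0} := by
    constructor
    · intro e he
      rw [Set.mem_setOf_eq] at he ⊢
      by_cases heL : e ∈ p.edges
      · exact hFe e heL
      · rw [h'not e heL] at he; exact he
    · intro hcon
      exact (hcon (hFe _ he1L : (p.edges[1]'h1lt) ∈ {e : Sym2 V | h e ≠ 0})) h'e1
  have hlt := Set.ncard_lt_ncard hssub (Set.toFinite _)
  omega
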